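/- Let k be an algebraically closed field, m = 2n, and let τ be an endomorphism of k^m such that the eigenspace of τ for some eigenvalue λ has dimension exactly n. Then there exists an n-dimensional linear subspace V of k^m such that k^m = V ⊕ τ(V). -/

import Mathlib

open Module Submodule

/-- Over an infinite field there is a vector outside two proper subspaces. -/
lemma exists_notMem_two {k E : Type*} [Field k] [Infinite k] [AddCommGroup E] [Module k E]
    {U W : Submodule k E} (hU : U ≠ ⊤) (hW : W ≠ ⊤) :
    ∃ x : E, x ∉ U ∧ x ∉ W := by
  classical
  by_contra hc
  push_neg at hc
  have hcov : ⋃ p ∈ ({U, W} : Finset (Submodule k E)), (p : Set E) = Set.univ := by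
    ext x
    simp only [Set.mem_iUnion, Set.mem_univ, iff_true, Finset.mem_insert, Finset.mem_singleton]
    by_cases hx : x ∈ U
    · exact ⟨U, Or.inl rfl, hx⟩
    · exact ⟨W, Or.inr rfl, hc x hx⟩
  have := Subspace.top_mem_of_biUnion_eq_univ hcov
  simp only [Finset.mem_insert, Finset.mem_singleton] at this
  rcases this with h | h
  · exact hU h.symm
  · exact hW h.symm

lemma isCompl_of_codisjoint_finrank {k E : Type*} [Field k] [AddCommGroup E] [Module k E]
    [FiniteDimensional k E] {U C : Submodule k E} (hsup : U ⊔ C = ⊤)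
    (hrank : finrank k U + finrank k C ≤ finrank k E) : IsCompl U C := by
  have key := Submodule.finrank_sup_add_finrank_inf_eq U C
  rw [hsup, finrank_top] at key
  refine ⟨?_, codisjoint_iff.mpr hsup⟩
  rw [disjoint_iff]
  have : finrank k ↥(U ⊓ C) = 0 := by omega
  exact Submodule.finrank_eq_zero.mp this

/-- Two subspaces of the same finite dimension have a common complement. -/
lemma exists_common_compl {k E : Type*} [Field k] [Infinite k] [AddCommGroup E] [Module k E]
    [FiniteDimensional k E] :
    ∀ c : ℕ, ∀ U W : Submodule k E, finrank k U = finrank k W →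
      finrank k E - finrank k U = c → ∃ C : Submodule k E, IsCompl U C ∧ IsCompl W C := by
  intro c
  induction c using Nat.strong_induction_on with
  | _ c IH =>
    intro U W hUW hc
    by_cases hU : U = ⊤
    · have hW : W = ⊤ := by
        apply Submodule.eq_top_of_finrank_eq
        rw [← hUW, hU, finrank_top]
      subst hU hW
      exact ⟨⊥, isCompl_top_bot, isCompl_top_bot⟩
    · have hW : W ≠ ⊤ := by
        intro hW
        apply hU
        apply Submodule.eq_top_of_finrank_eq
        rw [hUW, hW, finrank_top]
      obtain ⟨x, hxU, hxW⟩ := exists_notMem_two hU hW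
      have hx0 : x ≠ 0 := fun h => hxU (h ▸ U.zero_mem)
      have hdim : ∀ P : Submodule k E, x ∉ P →
          finrank k ↥(P ⊔ k ∙ x) = finrank k P + 1 := by
        intro P hxP
        have hinf : P ⊓ (k ∙ x) = ⊥ := by
          rw [eq_bot_iff]
          intro y hy
          rw [Submodule.mem_inf] at hy
          obtain ⟨hyP, hyx⟩ := hy
          obtain ⟨a, rfl⟩ := Submodule.mem_span_singleton.mp hyx
          rcases eq_or_ne a 0 with rfl | hane
          · simp
          · exfalso
            apply hxP
            have := P.smul_mem a⁻¹ hyP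
            rwa [smul_smul, inv_mul_cancel₀ hane, one_smul] at this
        have := Submodule.finrank_sup_add_finrank_inf_eq P (k ∙ x)
        rw [hinf, finrank_bot, add_zero, finrank_span_singleton hx0] at this
        omega
      have hUlt : finrank k U < finrank k E := Submodule.finrank_lt hU
      have hU' : finrank k ↥(U ⊔ k ∙ x) = finrank k U + 1 := hdim U hxU
      have hW' : finrank k ↥(W ⊔ k ∙ x) = finrank k W + 1 := hdim W hxW
      obtain ⟨C, hCU, hCW⟩ := IH (c - 1) (by omega) (U ⊔ k ∙ x) (W ⊔ k ∙ x)
        (by rw [hU', hW', hUW]) (by omega)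
      have hxC : x ∉ C := by
        intro hxC
        have hxU' : x ∈ U ⊔ k ∙ x := Submodule.mem_sup_right (Submodule.mem_span_singleton_self x)
        have : x ∈ (⊥ : Submodule k E) := by
          rw [← hCU.disjoint.eq_bot]; exact ⟨hxU', hxC⟩
        exact hx0 (by simpa using this)
      have hCrank : finrank k ↥(U ⊔ k ∙ x) + finrank k C = finrank k E :=
        Submodule.finrank_add_eq_of_isCompl hCU
      have hC' : finrank k ↥(C ⊔ k ∙ x) = finrank k C + 1 := hdim C hxC
      refine ⟨C ⊔ k ∙ x, ?_, ?_⟩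
      · apply isCompl_of_codisjoint_finrank
        · rw [sup_comm C (k ∙ x), ← sup_assoc]
          exact codisjoint_iff.mp hCU.codisjoint
        · omega
      · apply isCompl_of_codisjoint_finrank
        · rw [sup_comm C (k ∙ x), ← sup_assoc]
          exact codisjoint_iff.mp hCW.codisjoint
        · have := Submodule.finrank_add_eq_of_isCompl hCW
          omega

set_option maxHeartbeats 2000000 in
theorem stmt_0 (k : Type*) [Field k] [IsAlgClosed k] (n : ℕ) (hn : 0 < n)
    (τ : Module.End k (Fin (2 * n) → k)) (lam : k)
    (h : Module.finrank k (Module.End.eigenspace τ lam) = n) :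
    ∃ V : Submodule k (Fin (2 * n) → k),
      Module.finrank k V = n ∧ IsCompl V (V.map τ) := by
  set σ : Module.End k (Fin (2 * n) → k) := τ - lam • 1 with hσ
  have hEdim : finrank k (Fin (2 * n) → k) = 2 * n := Module.finrank_fin_fun k
  have hker : finrank k (LinearMap.ker σ) = n := by
    rw [Module.End.eigenspace_def] at h
    exact h
  have hrange : finrank k (LinearMap.range σ) = n := by
    have := LinearMap.finrank_range_add_finrank_ker σ
    rw [hker, hEdim] at this
    omega
  obtain ⟨V, hVker, hVrange⟩ := exists_common_compl (finrank k (Fin (2 * n) → k) - n)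
    (LinearMap.ker σ) (LinearMap.range σ) (by rw [hker, hrange]) (by rw [hker])
  have hVdim : finrank k V = n := by
    have := Submodule.finrank_add_eq_of_isCompl hVker
    rw [hker, hEdim] at this
    omega
  refine ⟨V, hVdim, ?_⟩
  -- map σ V = range σ
  have hmapσ : Submodule.map σ V = LinearMap.range σ := by
    apply Submodule.eq_of_le_of_finrank_eq (LinearMap.map_le_range)
    rw [hrange]
    have hkerres : LinearMap.ker (σ.comp V.subtype) = ⊥ := by
      rw [eq_bot_iff]
      intro y hy
      have : (y : Fin (2 * n) → k) ∈ LinearMap.ker σ ⊓ V := ⟨hy, y.2⟩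
      rw [hVker.disjoint.eq_bot] at this
      simpa using Subtype.ext (by simpa using this)
    have := LinearMap.finrank_range_add_finrank_ker (σ.comp V.subtype)
    rw [hkerres, finrank_bot, add_zero] at this
    rw [LinearMap.range_comp, Submodule.range_subtype] at this
    rw [this, hVdim]
  -- V ⊔ map τ V = ⊤
  have hsup : V ⊔ Submodule.map τ V = ⊤ := by
    have h1 : Submodule.map σ V ≤ V ⊔ Submodule.map τ V := by
      rintro _ ⟨v, hv, rfl⟩
      have : σ v = τ v - lam • v := by simp [hσ]
      rw [this]
      exact Submodule.sub_mem _ (Submodule.mem_sup_right (Submodule.mem_map_of_mem hv))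
        (Submodule.mem_sup_left (V.smul_mem lam hv))
    have h3 : LinearMap.range σ ≤ V ⊔ Submodule.map τ V := hmapσ ▸ h1
    have h2 : ⊤ ≤ V ⊔ Submodule.map τ V := by
      rw [← codisjoint_iff.mp hVrange.codisjoint]
      exact sup_le h3 le_sup_left
    exact top_le_iff.mp h2
  apply isCompl_of_codisjoint_finrank hsup
  have hm : finrank k (Submodule.map τ V) ≤ finrank k V := Submodule.finrank_map_le τ V
  omega
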